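/- Let p ≥ 1 and a, b ≥ 0 be real numbers. Then 0 ≤ (a+b)^{p+1}/(p+1) − a^{p+1}/(p+1) − a^p b ≤ (p/2) · b² · (a+b)^{p−1}. -/

import Mathlib

open Real

lemma rpow_tangent_le (q x y : ℝ) (hq : 1 ≤ q) (hx : 0 ≤ x) (hy : 0 ≤ y) :
    x ^ q + q * x ^ (q - 1) * (y - x) ≤ y ^ q := by
  rcases hx.eq_or_lt with rfl | hx
  · rcases hq.eq_or_lt with rfl | hq1
    · simp [Real.rpow_one]
    · rw [Real.zero_rpow (by positivity), Real.zero_rpow (by intro h; rw [sub_eq_zero] at h; exact hq1.ne h.symm)]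
      simpa using Real.rpow_nonneg hy q
  · have hs : -1 ≤ y / x - 1 := by
      have : 0 ≤ y / x := div_nonneg hy hx.le
      linarith
    have hb := one_add_mul_self_le_rpow_one_add hs hq
    have h1x : 1 + (y / x - 1) = y / x := by ring
    rw [h1x] at hb
    have hxq : 0 < x ^ q := Real.rpow_pos_of_pos hx q
    have key : x ^ q * (1 + q * (y / x - 1)) ≤ x ^ q * (y / x) ^ q :=
      mul_le_mul_of_nonneg_left hb hxq.le
    rw [Real.div_rpow hy hx.le, mul_div_cancel₀ _ (by positivity : x ^ q ≠ 0)] at key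
    have hsub : x ^ (q - 1) = x ^ q / x := Real.rpow_sub_one hx.ne' q
    calc x ^ q + q * x ^ (q - 1) * (y - x)
        = x ^ q * (1 + q * (y / x - 1)) := by
          rw [hsub]; field_simp
      _ ≤ y ^ q := key

theorem stmt_4 (p a b : ℝ) (hp : 1 ≤ p) (ha : 0 ≤ a) (hb : 0 ≤ b) :
    0 ≤ (a + b) ^ (p + 1) / (p + 1) - a ^ (p + 1) / (p + 1) - a ^ p * b ∧
    (a + b) ^ (p + 1) / (p + 1) - a ^ (p + 1) / (p + 1) - a ^ p * b ≤
      (p / 2) * b ^ 2 * (a + b) ^ (p - 1) := by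
  have hp1 : (0 : ℝ) < p + 1 := by linarith
  have hab : 0 ≤ a + b := by linarith
  constructor
  · have h := rpow_tangent_le (p + 1) a (a + b) (by linarith) ha hab
    rw [add_sub_cancel_right] at h
    have h2 : a ^ p * b ≤ ((a + b) ^ (p + 1) - a ^ (p + 1)) / (p + 1) := by
      rw [le_div_iff₀ hp1]
      have : (a + b) - a = b := by ring
      nlinarith [h]
    rw [div_sub_div_same]
    linarith
  · -- monotonicity argument
    set H : ℝ → ℝ := fun t =>
      (p / 2) * t ^ 2 * (a + b) ^ (p - 1) -
        ((a + t) ^ (p + 1) / (p + 1) - a ^ (p + 1) / (p + 1) - a ^ p * t) with hH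
    have hderiv : ∀ t : ℝ,
        HasDerivAt H (p * t * (a + b) ^ (p - 1) - ((a + t) ^ p - a ^ p)) t := by
      intro t
      have h1 : HasDerivAt (fun t : ℝ => (p / 2) * t ^ 2 * (a + b) ^ (p - 1))
          (p * t * (a + b) ^ (p - 1)) t := by
        have := ((hasDerivAt_pow 2 t).const_mul (p / 2)).mul_const ((a + b) ^ (p - 1))
        refine this.congr_deriv ?_
        push_cast
        ring
      have h2 : HasDerivAt (fun t : ℝ => (a + t) ^ (p + 1) / (p + 1)) ((a + t) ^ p) t := by
        have hin : HasDerivAt (fun t : ℝ => a + t) 1 t := (hasDerivAt_id t).const_add a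
        have := (hin.rpow_const (Or.inr (by linarith : (1:ℝ) ≤ p + 1))).div_const (p + 1)
        refine this.congr_deriv ?_
        rw [add_sub_cancel_right]
        field_simp
      have h3 : HasDerivAt (fun t : ℝ => (a + t) ^ (p + 1) / (p + 1) - a ^ (p + 1) / (p + 1)
          - a ^ p * t) ((a + t) ^ p - a ^ p) t := by
        have := ((h2.sub_const (a ^ (p + 1) / (p + 1))).sub
          ((hasDerivAt_id t).const_mul (a ^ p)))
        refine this.congr_deriv ?_
        ring
      exact h1.sub h3
    have hmono : MonotoneOn H (Set.Icc 0 b) := by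
      apply monotoneOn_of_deriv_nonneg (convex_Icc 0 b)
      · exact Continuous.continuousOn (continuous_iff_continuousAt.mpr
          fun t => (hderiv t).differentiableAt.continuousAt)
      · intro t ht
        exact (hderiv t).differentiableAt.differentiableWithinAt
      · intro t ht
        rw [interior_Icc] at ht
        obtain ⟨ht0, htb⟩ := ht
        rw [(hderiv t).deriv]
        have htan := rpow_tangent_le p (a + t) a hp (by linarith) ha
        have hmono' : (a + t) ^ (p - 1) ≤ (a + b) ^ (p - 1) :=
          Real.rpow_le_rpow (by linarith) (by linarith) (by linarith)
        have hpt : 0 ≤ p * t * ((a + b) ^ (p - 1) - (a + t) ^ (p - 1)) := by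
          apply mul_nonneg (mul_nonneg (by linarith) ht0.le)
          linarith
        nlinarith [htan]
    have h0 : H 0 = 0 := by simp [hH]
    have hb' : H 0 ≤ H b := hmono (Set.left_mem_Icc.mpr hb) (Set.right_mem_Icc.mpr hb) hb
    rw [h0] at hb'
    simp only [hH] at hb'
    linarith
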